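/- Non-uniqueness of self-consistent velocities in dimension three: let p₁ = (1,0,1), p₂ = (1,0,−1), p₃ = (−1,1,0), p₄ = (−1,−1,0) in ℝ³, let H_i = ‖p_i‖²/2 = 1 for i = 1,…,4, and let v₁ = (−1/2, 0, 2), v₂ = (−1/2, 0, −2), v₃ = (1/2, 2, 0), v₄ = (1/2, −2, 0). For v ∈ ℝ³ set I(v) = {j : −H_j + ⟨p_j, v⟩ = min_{1≤i≤4}(−H_i + ⟨p_i, v⟩)}, and call v self-consistent if v ∈ convexHull{v_j : j ∈ I(v)}. Then the three pairwise distinct vectors v' = (−1/2, 0, 0), v'' = (1/2, 0, 0), and v''' = (0,0,0) are all self-consistent. -/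

import Mathlib

open scoped InnerProductSpace

noncomputable section

/-- The four momenta `p₁ = (1,0,1)`, `p₂ = (1,0,−1)`, `p₃ = (−1,1,0)`, `p₄ = (−1,−1,0)`. -/
def pEx : Fin 4 → EuclideanSpace ℝ (Fin 3) := fun i =>
  (WithLp.equiv 2 (Fin 3 → ℝ)).symm
    (![![1, 0, 1], ![1, 0, -1], ![-1, 1, 0], ![-1, -1, 0]] i)

/-- The values `H_i = ‖p_i‖²/2`. -/
def HEx : Fin 4 → ℝ := fun i => ‖pEx i‖ ^ 2 / 2

/-- The four velocities `v₁ = (−1/2,0,2)`, `v₂ = (−1/2,0,−2)`, `v₃ = (1/2,2,0)`,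
`v₄ = (1/2,−2,0)`. -/
def vEx : Fin 4 → EuclideanSpace ℝ (Fin 3) := fun i =>
  (WithLp.equiv 2 (Fin 3 → ℝ)).symm
    (![![-1/2, 0, 2], ![-1/2, 0, -2], ![1/2, 2, 0], ![1/2, -2, 0]] i)

/-- `v` is self-consistent if it lies in the convex hull of the velocities `v_j` over the
active indices `j ∈ I(v)`. -/
def SelfConsistent (v : EuclideanSpace ℝ (Fin 3)) : Prop :=
  v ∈ convexHull ℝ (vEx '' {j | -HEx j + ⟪pEx j, v⟫_ℝ
    = Finset.univ.inf' Finset.univ_nonempty fun i => -HEx i + ⟪pEx i, v⟫_ℝ})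

lemma HEx_eq (i : Fin 4) : HEx i = 1 := by
  have h : ∀ x : Fin 3 → ℝ, ‖(WithLp.equiv 2 (Fin 3 → ℝ)).symm x‖^2 = x 0^2 + x 1^2 + x 2^2 := by
    intro x; rw [EuclideanSpace.norm_sq_eq]; simp [Fin.sum_univ_three]
  fin_cases i <;> simp [HEx, pEx, EuclideanSpace.norm_sq_eq, Fin.sum_univ_three] <;> norm_num

lemma inner_pEx (i : Fin 4) (x : Fin 3 → ℝ) :
    ⟪pEx i, (WithLp.equiv 2 (Fin 3 → ℝ)).symm x⟫_ℝ
      = ![ x 0 + x 2, x 0 - x 2, -x 0 + x 1, -x 0 - x 1] i := by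
  fin_cases i <;> simp [pEx, PiLp.inner_apply, Fin.sum_univ_three] <;> ring

lemma comboEx (a b : Fin 4) (x : Fin 3 → ℝ)
    (h : ∀ i : Fin 3, x i = (1/2) * (vEx a) i + (1/2) * (vEx b) i) :
    (WithLp.equiv 2 (Fin 3 → ℝ)).symm x = (1/2 : ℝ) • vEx a + (1/2 : ℝ) • vEx b := by
  have : ∀ i : Fin 3, ((WithLp.equiv 2 (Fin 3 → ℝ)).symm x) i
      = ((1/2 : ℝ) • vEx a + (1/2 : ℝ) • vEx b) i := by
    intro i; simpa [PiLp.add_apply, PiLp.smul_apply, smul_eq_mul] using h i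
  exact WithLp.ofLp_injective _ (funext this)

lemma sc1 : SelfConsistent ((WithLp.equiv 2 (Fin 3 → ℝ)).symm ![-1/2, 0, 0]) := by
  set v := (WithLp.equiv 2 (Fin 3 → ℝ)).symm ![(-1 : ℝ)/2, 0, 0] with hv
  have hf : ∀ j : Fin 4, -HEx j + ⟪pEx j, v⟫_ℝ = ![(-3:ℝ)/2,-3/2,-1/2,-1/2] j := by
    intro j; rw [HEx_eq, hv, inner_pEx]; fin_cases j <;> norm_num [Matrix.cons_val_two, Matrix.vecHead, Matrix.vecTail]
  have hinf : (Finset.univ.inf' Finset.univ_nonempty fun i => -HEx i + ⟪pEx i, v⟫_ℝ)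
      = -3/2 := by
    simp only [hf]
    simp [show (Finset.univ : Finset (Fin 4)) = {0,1,2,3} from rfl, Finset.inf'_insert]
    norm_num
  have hinf2 : (Finset.univ.inf' Finset.univ_nonempty
      fun x : Fin 4 => (![(-3:ℝ)/2,-3/2,-1/2,-1/2]) x) = -3/2 := by
    simp [show (Finset.univ : Finset (Fin 4)) = {0,1,2,3} from rfl, Finset.inf'_insert]
    norm_num
  have hset : {j | -HEx j + ⟪pEx j, v⟫_ℝ
      = Finset.univ.inf' Finset.univ_nonempty fun i => -HEx i + ⟪pEx i, v⟫_ℝ}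
      = ({0, 1} : Set (Fin 4)) := by
    ext j; simp only [Set.mem_setOf_eq, hf, hinf2]
    fin_cases j <;> norm_num [Set.mem_insert_iff, Set.mem_singleton_iff] <;> decide
  have heq : v = (1/2 : ℝ) • vEx 0 + (1/2 : ℝ) • vEx 1 := by
    apply comboEx; intro i; fin_cases i <;> norm_num [vEx, Matrix.cons_val_two, Matrix.cons_val_three, Matrix.vecHead, Matrix.vecTail]
  unfold SelfConsistent
  rw [hset, Set.image_insert_eq, Set.image_singleton, heq]
  exact (convex_convexHull ℝ _) (subset_convexHull ℝ _ (by simp))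
    (subset_convexHull ℝ _ (by simp)) (by norm_num) (by norm_num) (by norm_num)

lemma sc2 : SelfConsistent ((WithLp.equiv 2 (Fin 3 → ℝ)).symm ![1/2, 0, 0]) := by
  set v := (WithLp.equiv 2 (Fin 3 → ℝ)).symm ![(1 : ℝ)/2, 0, 0] with hv
  have hf : ∀ j : Fin 4, -HEx j + ⟪pEx j, v⟫_ℝ = ![(-1:ℝ)/2,-1/2,-3/2,-3/2] j := by
    intro j; rw [HEx_eq, hv, inner_pEx]; fin_cases j <;> norm_num [Matrix.cons_val_two, Matrix.vecHead, Matrix.vecTail]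
  have hinf : (Finset.univ.inf' Finset.univ_nonempty fun i => -HEx i + ⟪pEx i, v⟫_ℝ)
      = -3/2 := by
    simp only [hf]
    simp [show (Finset.univ : Finset (Fin 4)) = {0,1,2,3} from rfl, Finset.inf'_insert]
    norm_num
  have hinf2 : (Finset.univ.inf' Finset.univ_nonempty
      fun x : Fin 4 => (![(-1:ℝ)/2,-1/2,-3/2,-3/2]) x) = -3/2 := by
    simp [show (Finset.univ : Finset (Fin 4)) = {0,1,2,3} from rfl, Finset.inf'_insert]
    norm_num
  have hset : {j | -HEx j + ⟪pEx j, v⟫_ℝ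
      = Finset.univ.inf' Finset.univ_nonempty fun i => -HEx i + ⟪pEx i, v⟫_ℝ}
      = ({2, 3} : Set (Fin 4)) := by
    ext j; simp only [Set.mem_setOf_eq, hf, hinf2]
    fin_cases j <;> norm_num [Set.mem_insert_iff, Set.mem_singleton_iff] <;> decide
  have heq : v = (1/2 : ℝ) • vEx 2 + (1/2 : ℝ) • vEx 3 := by
    apply comboEx; intro i; fin_cases i <;> norm_num [vEx, Matrix.cons_val_two, Matrix.cons_val_three, Matrix.vecHead, Matrix.vecTail]
  unfold SelfConsistent
  rw [hset, Set.image_insert_eq, Set.image_singleton, heq]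
  exact (convex_convexHull ℝ _) (subset_convexHull ℝ _ (by simp))
    (subset_convexHull ℝ _ (by simp)) (by norm_num) (by norm_num) (by norm_num)

lemma sc3 : SelfConsistent ((WithLp.equiv 2 (Fin 3 → ℝ)).symm ![0, 0, 0]) := by
  set v := (WithLp.equiv 2 (Fin 3 → ℝ)).symm ![(0 : ℝ), 0, 0] with hv
  have hf : ∀ j : Fin 4, -HEx j + ⟪pEx j, v⟫_ℝ = -1 := by
    intro j; rw [HEx_eq, hv, inner_pEx]; fin_cases j <;> norm_num [Matrix.cons_val_two, Matrix.vecHead, Matrix.vecTail]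
  have hset : {j | -HEx j + ⟪pEx j, v⟫_ℝ
      = Finset.univ.inf' Finset.univ_nonempty fun i => -HEx i + ⟪pEx i, v⟫_ℝ}
      = (Set.univ : Set (Fin 4)) := by
    have hinf2 : (Finset.univ.inf' Finset.univ_nonempty
        fun i => -HEx i + ⟪pEx i, v⟫_ℝ) = -1 := by
      simp only [hf]; simp
    ext j; simp only [Set.mem_setOf_eq, hf, hinf2, Set.mem_univ, iff_true]; simp
  have h01 : (1/2 : ℝ) • vEx 0 + (1/2 : ℝ) • vEx 1 ∈ convexHull ℝ (vEx '' Set.univ) := by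
    exact (convex_convexHull ℝ _) (subset_convexHull ℝ _ (by simp))
      (subset_convexHull ℝ _ (by simp)) (by norm_num) (by norm_num) (by norm_num)
  have h23 : (1/2 : ℝ) • vEx 2 + (1/2 : ℝ) • vEx 3 ∈ convexHull ℝ (vEx '' Set.univ) := by
    exact (convex_convexHull ℝ _) (subset_convexHull ℝ _ (by simp))
      (subset_convexHull ℝ _ (by simp)) (by norm_num) (by norm_num) (by norm_num)
  have heq : v = (1/2 : ℝ) • ((1/2 : ℝ) • vEx 0 + (1/2 : ℝ) • vEx 1)
      + (1/2 : ℝ) • ((1/2 : ℝ) • vEx 2 + (1/2 : ℝ) • vEx 3) := by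
    have : ∀ i : Fin 3, (v : Fin 3 → ℝ) i
        = ((1/2 : ℝ) • ((1/2 : ℝ) • vEx 0 + (1/2 : ℝ) • vEx 1)
          + (1/2 : ℝ) • ((1/2 : ℝ) • vEx 2 + (1/2 : ℝ) • vEx 3)) i := by
      intro i; fin_cases i <;>
        simp [hv, vEx, PiLp.add_apply, PiLp.smul_apply, smul_eq_mul] <;> norm_num
    exact WithLp.ofLp_injective _ (funext this)
  unfold SelfConsistent
  rw [hset, heq]
  exact (convex_convexHull ℝ _) h01 h23 (by norm_num) (by norm_num) (by norm_num)

/-- Non-uniqueness of self-consistent velocities in dimension three: the three pairwise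
distinct vectors `v' = (−1/2,0,0)`, `v'' = (1/2,0,0)` and `v''' = 0` are all
self-consistent. -/
theorem three_self_consistent_velocities :
    letI v' : EuclideanSpace ℝ (Fin 3) :=
      (WithLp.equiv 2 (Fin 3 → ℝ)).symm ![-1/2, 0, 0]
    letI v'' : EuclideanSpace ℝ (Fin 3) :=
      (WithLp.equiv 2 (Fin 3 → ℝ)).symm ![1/2, 0, 0]
    letI v''' : EuclideanSpace ℝ (Fin 3) :=
      (WithLp.equiv 2 (Fin 3 → ℝ)).symm ![0, 0, 0]
    v' ≠ v'' ∧ v' ≠ v''' ∧ v'' ≠ v''' ∧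
      SelfConsistent v' ∧ SelfConsistent v'' ∧ SelfConsistent v''' := by
  refine ⟨?_, ?_, ?_, sc1, sc2, sc3⟩ <;>
    · intro h; have := congrArg (fun v : EuclideanSpace ℝ (Fin 3) => v 0) h; norm_num at this
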